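/- For every integer n ≥ 4, the Mycielskian of K_n^-, the complete graph on n vertices with one edge deleted, satisfies gp(μ(K_n^-)) = n. -/

import Mathlib

open SimpleGraph

variable {V : Type*}

/-- The Mycielskian of a graph `G`: vertices are `some (Sum.inl v)` (original vertices),
`some (Sum.inr v)` (twin vertices), and `none` (the root `u*`). -/
def Mycielskian (G : SimpleGraph V) : SimpleGraph (Option (V ⊕ V)) :=
  SimpleGraph.fromRel (fun x y =>
    (∃ u v, G.Adj u v ∧ x = some (Sum.inl u) ∧ y = some (Sum.inl v)) ∨
    (∃ u v, G.Adj u v ∧ x = some (Sum.inl u) ∧ y = some (Sum.inr v)) ∨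
    (∃ u, x = some (Sum.inr u) ∧ y = none))

/-- `S` is a general position set: no shortest path between two vertices of `S`
contains a third element of `S`. -/
def IsGPSet (G : SimpleGraph V) (S : Set V) : Prop :=
  ∀ u ∈ S, ∀ v ∈ S, ∀ p : G.Walk u v, p.length = G.dist u v →
    ∀ w ∈ S, w ∈ p.support → w = u ∨ w = v

/-- The general position number of `G`: the maximum cardinality of a general position set. -/
noncomputable def gpNumber (G : SimpleGraph V) [Fintype V] : ℕ :=
  sSup {k | ∃ S : Set V, IsGPSet G S ∧ S.ncard = k}

/-- A gp-set: a general position set of maximum cardinality. -/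
def IsGpSet (G : SimpleGraph V) [Fintype V] (S : Set V) : Prop :=
  IsGPSet G S ∧ S.ncard = gpNumber G

/-! ### Auxiliary definitions and lemmas -/

def Kg (a b : V) : SimpleGraph V := (⊤ : SimpleGraph V).deleteEdges {s(a, b)}

section adjlemmas

variable {G : SimpleGraph V} {u v : V}

lemma myc_adj_ll : (Mycielskian G).Adj (some (Sum.inl u)) (some (Sum.inl v)) ↔ G.Adj u v := by
  simp only [Mycielskian, fromRel_adj]
  constructor
  · rintro ⟨hne, h | h⟩ <;>
      rcases h with ⟨u', v', hadj, h1, h2⟩ | ⟨u', v', hadj, h1, h2⟩ | ⟨u', h1, h2⟩ <;>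
      simp_all
    exact hadj.symm
  · intro h
    exact ⟨by simp [h.ne], Or.inl (Or.inl ⟨u, v, h, rfl, rfl⟩)⟩

lemma myc_adj_lr : (Mycielskian G).Adj (some (Sum.inl u)) (some (Sum.inr v)) ↔ G.Adj u v := by
  simp only [Mycielskian, fromRel_adj]
  constructor
  · rintro ⟨hne, h | h⟩ <;>
      rcases h with ⟨u', v', hadj, h1, h2⟩ | ⟨u', v', hadj, h1, h2⟩ | ⟨u', h1, h2⟩ <;>
      simp_all
  · intro h
    exact ⟨by simp, Or.inl (Or.inr (Or.inl ⟨u, v, h, rfl, rfl⟩))⟩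

lemma myc_adj_rl : (Mycielskian G).Adj (some (Sum.inr u)) (some (Sum.inl v)) ↔ G.Adj v u := by
  rw [(Mycielskian G).adj_comm, myc_adj_lr]

lemma myc_adj_rr : ¬ (Mycielskian G).Adj (some (Sum.inr u)) (some (Sum.inr v)) := by
  simp only [Mycielskian, fromRel_adj]
  rintro ⟨hne, h | h⟩ <;>
    rcases h with ⟨u', v', hadj, h1, h2⟩ | ⟨u', v', hadj, h1, h2⟩ | ⟨u', h1, h2⟩ <;> simp_all

lemma myc_adj_rn : (Mycielskian G).Adj (some (Sum.inr u)) none := by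
  simp only [Mycielskian, fromRel_adj]
  refine ⟨by simp, Or.inl (Or.inr (Or.inr ⟨u, rfl, by trivial⟩))⟩

lemma myc_adj_nr : (Mycielskian G).Adj none (some (Sum.inr u)) := myc_adj_rn.symm

lemma myc_adj_ln : ¬ (Mycielskian G).Adj (some (Sum.inl u)) none := by
  simp only [Mycielskian, fromRel_adj]
  rintro ⟨hne, h | h⟩ <;>
    rcases h with ⟨u', v', hadj, h1, h2⟩ | ⟨u', v', hadj, h1, h2⟩ | ⟨u', h1, h2⟩ <;> simp_all

lemma myc_adj_nl : ¬ (Mycielskian G).Adj none (some (Sum.inl u)) := fun h => myc_adj_ln h.symm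


end adjlemmas


lemma Kadj {a b u v : V} :
    (Kg a b).Adj u v ↔
      u ≠ v ∧ ¬(u = a ∧ v = b) ∧ ¬(u = b ∧ v = a) := by
  simp only [Kg, deleteEdges_adj, top_adj, Set.mem_singleton_iff, Sym2.eq, Sym2.rel_iff',
    Prod.mk.injEq, Prod.swap_prod_mk]
  tauto

lemma not_Kadj {a b u v : V} :
    ¬ (Kg a b).Adj u v ↔ u = v ∨ (u = a ∧ v = b) ∨ (u = b ∧ v = a) := by
  rw [Kadj]; tauto

lemma Kadj_of_fresh {a b u c : V} (h1 : c ≠ u) (h2 : c ≠ a) (h3 : c ≠ b) :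
    (Kg a b).Adj u c :=
  Kadj.mpr ⟨fun h => h1 h.symm, fun h => h3 h.2, fun h => h2 h.2⟩


lemma exists_fresh [Fintype V] (hn : 4 ≤ Fintype.card V) (u a b : V) :
    ∃ c, c ≠ u ∧ c ≠ a ∧ c ≠ b := by
  classical
  by_contra h
  push_neg at h
  have : (Finset.univ : Finset V) ⊆ {u, a, b} := by
    intro x _
    by_cases h1 : x = u
    · simp [h1]
    by_cases h2 : x = a
    · simp [h2]
    · simp [h x h1 h2]
  have := Finset.card_le_card this
  have h3 : ({u, a, b} : Finset V).card ≤ 3 := by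
    apply le_trans (Finset.card_insert_le _ _)
    have := Finset.card_insert_le a ({b} : Finset V)
    simp at this ⊢
    omega
  simp [Finset.card_univ] at this
  omega

lemma ncard_le_two_of_subset_pair {A : Set V} {x y : V} (h : A ⊆ {x, y}) : A.ncard ≤ 2 := by
  classical
  calc A.ncard ≤ ({x, y} : Set V).ncard := Set.ncard_le_ncard h (Set.toFinite _)
    _ ≤ ({y} : Set V).ncard + 1 := Set.ncard_insert_le _ _
    _ ≤ 2 := by rw [Set.ncard_singleton]


set_option linter.unusedSectionVars false
section main
variable [Fintype V] {a b : V}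

variable [Fintype V] {a b : V}

lemma exists_common (hn : 4 ≤ Fintype.card V) {x y : Option (V ⊕ V)}
    (hxy : x ≠ y) (hnadj : ¬ (Mycielskian (Kg a b)).Adj x y) :
    ∃ z, (Mycielskian (Kg a b)).Adj x z ∧ (Mycielskian (Kg a b)).Adj z y := by
  match x, y with
  | none, none => exact absurd rfl hxy
  | none, some (Sum.inr v) => exact absurd myc_adj_nr hnadj
  | some (Sum.inr u), none => exact absurd myc_adj_rn hnadj
  | none, some (Sum.inl v) =>
    obtain ⟨c, h1, h2, h3⟩ := exists_fresh hn v a b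
    exact ⟨some (Sum.inr c), myc_adj_nr, myc_adj_rl.mpr (Kadj_of_fresh h1 h2 h3)⟩
  | some (Sum.inl u), none =>
    obtain ⟨c, h1, h2, h3⟩ := exists_fresh hn u a b
    exact ⟨some (Sum.inr c), myc_adj_lr.mpr (Kadj_of_fresh h1 h2 h3), myc_adj_rn⟩
  | some (Sum.inr u), some (Sum.inr v) => exact ⟨none, myc_adj_rn, myc_adj_nr⟩
  | some (Sum.inl u), some (Sum.inl v) =>
    obtain ⟨c, h1, h2, h3⟩ := exists_fresh hn u a b
    have hk := not_Kadj.mp (fun h => hnadj (myc_adj_ll.mpr h))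
    have hcv : c ≠ v := by
      rcases hk with h | ⟨h, h'⟩ | ⟨h, h'⟩
      · exact h ▸ h1
      · exact h' ▸ h3
      · exact h' ▸ h2
    exact ⟨some (Sum.inl c), myc_adj_ll.mpr (Kadj_of_fresh h1 h2 h3),
      myc_adj_ll.mpr ((Kadj_of_fresh hcv h2 h3).symm)⟩
  | some (Sum.inl u), some (Sum.inr v) =>
    obtain ⟨c, h1, h2, h3⟩ := exists_fresh hn u a b
    have hk := not_Kadj.mp (fun h => hnadj (myc_adj_lr.mpr h))
    have hcv : c ≠ v := by
      rcases hk with h | ⟨h, h'⟩ | ⟨h, h'⟩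
      · exact h ▸ h1
      · exact h' ▸ h3
      · exact h' ▸ h2
    exact ⟨some (Sum.inl c), myc_adj_ll.mpr (Kadj_of_fresh h1 h2 h3),
      myc_adj_lr.mpr ((Kadj_of_fresh hcv h2 h3).symm)⟩
  | some (Sum.inr u), some (Sum.inl v) =>
    obtain ⟨c, h1, h2, h3⟩ := exists_fresh hn u a b
    have hk : v = u ∨ (v = a ∧ u = b) ∨ (v = b ∧ u = a) :=
      not_Kadj.mp (fun h => hnadj (myc_adj_rl.mpr h))
    have hcv : c ≠ v := by
      rcases hk with h | ⟨h, h'⟩ | ⟨h, h'⟩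
      · exact h ▸ h1
      · exact h ▸ h2
      · exact h ▸ h3
    exact ⟨some (Sum.inl c), myc_adj_rl.mpr (Kadj_of_fresh h1 h2 h3).symm,
      myc_adj_ll.mpr ((Kadj_of_fresh hcv h2 h3).symm)⟩

lemma myc_dist_le_two (hn : 4 ≤ Fintype.card V) (x y : Option (V ⊕ V)) :
    (Mycielskian (Kg a b)).dist x y ≤ 2 := by
  by_cases hxy : x = y
  · subst hxy; rw [dist_self]; omega
  by_cases hadj : (Mycielskian (Kg a b)).Adj x y
  · calc (Mycielskian (Kg a b)).dist x y ≤ (Walk.cons hadj Walk.nil).length :=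
        dist_le _
      _ = 1 := by simp
      _ ≤ 2 := by omega
  obtain ⟨z, h1, h2⟩ := exists_common hn hxy hadj
  calc (Mycielskian (Kg a b)).dist x y ≤ (Walk.cons h1 (Walk.cons h2 Walk.nil)).length :=
      dist_le _
    _ = 2 := by simp

lemma myc_dist_eq_two (hn : 4 ≤ Fintype.card V) {x y : Option (V ⊕ V)}
    (hxy : x ≠ y) (hnadj : ¬ (Mycielskian (Kg a b)).Adj x y) :
    (Mycielskian (Kg a b)).dist x y = 2 := by
  have hle := myc_dist_le_two (a := a) (b := b) hn x y
  obtain ⟨z, h1, h2⟩ := exists_common hn hxy hnadj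
  have hreach : (Mycielskian (Kg a b)).Reachable x y :=
    ⟨Walk.cons h1 (Walk.cons h2 Walk.nil)⟩
  have h0 : (Mycielskian (Kg a b)).dist x y ≠ 0 := by
    intro h
    rcases (dist_eq_zero_iff_eq_or_not_reachable).mp h with h | h
    · exact hxy h
    · exact h hreach
  have h1' : (Mycielskian (Kg a b)).dist x y ≠ 1 := fun h =>
    hnadj (dist_eq_one_iff_adj.mp h)
  omega


variable [Fintype V] {a b : V}

lemma gp_no_middle (hn : 4 ≤ Fintype.card V) {S : Set (Option (V ⊕ V))}
    (hS : IsGPSet (Mycielskian (Kg a b)) S) {x y z : Option (V ⊕ V)}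
    (hx : x ∈ S) (hy : y ∈ S) (hz : z ∈ S) (hxy : x ≠ y) (hzx : z ≠ x) (hzy : z ≠ y)
    (hnadj : ¬ (Mycielskian (Kg a b)).Adj x y)
    (h1 : (Mycielskian (Kg a b)).Adj x z) (h2 : (Mycielskian (Kg a b)).Adj z y) : False := by
  have hd := myc_dist_eq_two hn hxy hnadj
  have hlen : (Walk.cons h1 (Walk.cons h2 Walk.nil)).length =
      (Mycielskian (Kg a b)).dist x y := by
    rw [hd]; simp
  have := hS x hx y hy _ hlen z hz (by simp)
  rcases this with h | h
  · exact hzx h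
  · exact hzy h

lemma lower_gp (hn : 4 ≤ Fintype.card V) :
    IsGPSet (Mycielskian (Kg a b)) (Set.range (fun v : V => some (Sum.inr v))) := by
  intro u hu v hv p hlen w hw hsup
  have hplen : p.length ≤ 2 := by
    rw [hlen]; exact myc_dist_le_two hn u v
  cases p with
  | nil => exact Or.inl (by simpa using hsup)
  | cons h q =>
    cases q with
    | nil =>
      simp only [Walk.support_cons, Walk.support_nil, List.mem_cons, List.mem_singleton] at hsup
      rcases hsup with h' | h' | h'
      · exact Or.inl h'
      · exact Or.inr h'
      · simp at h'
    | cons h' q2 =>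
      cases q2 with
      | nil =>
        simp only [Walk.support_cons, Walk.support_nil, List.mem_cons,
          List.mem_singleton] at hsup
        rcases hsup with h1 | h1 | h1 | h1
        · exact Or.inl h1
        · exfalso
          obtain ⟨u₀, hu₀⟩ := hu
          obtain ⟨w₀, hw₀⟩ := hw
          subst h1
          rw [← hu₀, ← hw₀] at h
          exact myc_adj_rr h
        · exact Or.inr h1
        · simp at h1
      | cons h'' q3 => simp [Walk.length_cons] at hplen

set_option linter.unusedSectionVars false in
lemma count_main [Fintype V] {a b : V} (hn : 4 ≤ Fintype.card V) (hab : a ≠ b)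
    (A B : Set V) (c : ℕ) (hc : c ≤ 1)
    (F1 : c = 1 → ∀ u ∈ B, ∀ v ∈ B, u = v)
    (F2 : ∀ u ∈ B, ∀ v ∈ B, ∀ w ∈ A, u ≠ v →
      (w = u ∨ (w = a ∧ u = b) ∨ (w = b ∧ u = a)) ∨
      (w = v ∨ (w = a ∧ v = b) ∨ (w = b ∧ v = a)))
    (F3 : ∀ u, u ∈ A → u ∈ B → ∀ w ∈ A, w ≠ u →
      (w = u ∨ (w = a ∧ u = b) ∨ (w = b ∧ u = a)))
    (F5a : a ∈ A → b ∈ A → ∀ x ∈ A, x = a ∨ x = b)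
    (F5b : a ∈ A → b ∈ A → ∀ x ∈ B, x = a ∨ x = b)
    (F6 : c = 1 → ∀ u ∈ A, ∀ w ∈ B,
      (u = w ∨ (u = a ∧ w = b) ∨ (u = b ∧ w = a))) :
    A.ncard + B.ncard + c ≤ Fintype.card V := by
  classical
  have hAcard : ¬(a ∈ A ∧ b ∈ A) → A.ncard + 1 ≤ Fintype.card V := by
    intro h
    have hm : ∃ m, m ∉ A := by
      by_cases ha : a ∈ A
      · exact ⟨b, fun hb => h ⟨ha, hb⟩⟩
      · exact ⟨a, ha⟩
    obtain ⟨m, hm⟩ := hm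
    have hss : A ⊂ Set.univ := ⟨Set.subset_univ _, fun h' => hm (h' trivial)⟩
    have := Set.ncard_lt_ncard hss Set.finite_univ
    rw [Set.ncard_univ, Nat.card_eq_fintype_card] at this
    omega
  have hBuniv : B.ncard ≤ Fintype.card V := by
    have := Set.ncard_le_ncard (Set.subset_univ B) Set.finite_univ
    rwa [Set.ncard_univ, Nat.card_eq_fintype_card] at this
  by_cases hc1 : c = 1
  · have hB1 : B.ncard ≤ 1 := (Set.ncard_le_one (Set.toFinite _)).mpr
      (fun u hu v hv => F1 hc1 u hu v hv)
    by_cases hBe : B = ∅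
    · rw [hBe, Set.ncard_empty]
      by_cases hA : a ∈ A ∧ b ∈ A
      · have := ncard_le_two_of_subset_pair (fun x hx => F5a hA.1 hA.2 x hx)
        omega
      · have := hAcard hA
        omega
    · obtain ⟨w, hw⟩ := Set.nonempty_iff_ne_empty.mpr hBe
      have hAsmall : A.ncard ≤ 2 := by
        have hsub' : ∀ u ∈ A, u = w ∨ (u = a ∧ w = b) ∨ (u = b ∧ w = a) :=
          fun u hu => F6 hc1 u hu w hw
        by_cases hwa : w = a
        · refine ncard_le_two_of_subset_pair (x := a) (y := b) (fun u hu => ?_)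
          rcases hsub' u hu with h | ⟨h, h'⟩ | ⟨h, h'⟩
          · exact Or.inl (h.trans hwa)
          · exact absurd (hwa.symm.trans h') hab
          · exact Or.inr h
        by_cases hwb : w = b
        · refine ncard_le_two_of_subset_pair (x := a) (y := b) (fun u hu => ?_)
          rcases hsub' u hu with h | ⟨h, h'⟩ | ⟨h, h'⟩
          · exact Or.inr (h.trans hwb)
          · exact Or.inl h
          · exact absurd (hwb.symm.trans h') hab.symm
        · refine ncard_le_two_of_subset_pair (x := w) (y := w) (fun u hu => ?_)
          rcases hsub' u hu with h | ⟨h, h'⟩ | ⟨h, h'⟩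
          · exact Or.inl h
          · exact absurd h' hwb
          · exact absurd h' hwa
      omega
  · have hc0 : c = 0 := by omega
    subst hc0
    by_cases hA : a ∈ A ∧ b ∈ A
    · have h1 : A.ncard ≤ 2 := ncard_le_two_of_subset_pair
        (fun x hx => F5a hA.1 hA.2 x hx)
      have h2 : B.ncard ≤ 2 := ncard_le_two_of_subset_pair
        (fun x hx => F5b hA.1 hA.2 x hx)
      omega
    · by_cases hB2 : ∃ u ∈ B, ∃ v ∈ B, u ≠ v
      · obtain ⟨u, hu, v, hv, huv⟩ := hB2
        by_cases hAw : ∃ w ∈ A, w ≠ a ∧ w ≠ b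
        · obtain ⟨w, hw, hwa, hwb⟩ := hAw
          have hpair : ∀ p ∈ B, ∀ q ∈ B, p ≠ q → w = p ∨ w = q := by
            intro p hp q hq hpq
            rcases F2 p hp q hq w hw hpq with h' | h' <;>
              rcases h' with h'' | ⟨h'', _⟩ | ⟨h'', _⟩
            · exact Or.inl h''
            · exact absurd h'' hwa
            · exact absurd h'' hwb
            · exact Or.inr h''
            · exact absurd h'' hwa
            · exact absurd h'' hwb
          have hwB : w ∈ B := by
            rcases hpair u hu v hv huv with h | h
            · exact h ▸ hu
            · exact h ▸ hv
          have hBsub : B ⊆ {u, v} := by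
            intro p hp
            by_contra hpuv
            simp only [Set.mem_insert_iff, Set.mem_singleton_iff, not_or] at hpuv
            obtain ⟨hpu, hpv⟩ := hpuv
            rcases hpair u hu v hv huv with h | h
            · rcases hpair p hp v hv hpv with h' | h'
              · exact hpu (h'.symm.trans h)
              · exact huv (h.symm.trans h')
            · rcases hpair p hp u hu hpu with h' | h'
              · exact hpv (h'.symm.trans h)
              · exact huv (h'.symm.trans h)
          have hBc : B.ncard ≤ 2 := ncard_le_two_of_subset_pair hBsub
          have hAc : A.ncard ≤ 2 := by
            refine ncard_le_two_of_subset_pair (x := w) (y := w) (fun p hp => ?_)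
            by_cases hpw : p = w
            · exact Or.inl hpw
            · rcases F3 w hw hwB p hp hpw with h | ⟨_, h⟩ | ⟨_, h⟩
              · exact Or.inl h
              · exact absurd h hwb
              · exact absurd h hwa
          omega
        · push_neg at hAw
          have hAab : ∀ w ∈ A, w = a ∨ w = b := by
            intro w hw
            by_cases h : w = a
            · exact Or.inl h
            · exact Or.inr (hAw w hw h)
          have hA1 : A.ncard ≤ 1 := by
            refine (Set.ncard_le_one (Set.toFinite _)).mpr (fun p hp q hq => ?_)
            by_contra hpq
            rcases hAab p hp with h1 | h1 <;> rcases hAab q hq with h2 | h2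
            · exact hpq (h1.trans h2.symm)
            · exact hA ⟨h1 ▸ hp, h2 ▸ hq⟩
            · exact hA ⟨h2 ▸ hq, h1 ▸ hp⟩
            · exact hpq (h1.trans h2.symm)
          by_cases hAe : A = ∅
          · rw [hAe, Set.ncard_empty]
            omega
          · obtain ⟨w₀, hw₀⟩ := Set.nonempty_iff_ne_empty.mpr hAe
            have hhit : ∀ p ∈ B, ∀ q ∈ B, p ≠ q → p = a ∨ p = b ∨ q = a ∨ q = b := by
              intro p hp q hq hpq
              have h' := F2 p hp q hq w₀ hw₀ hpq
              rcases hAab w₀ hw₀ with hw0 | hw0 <;> subst hw0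
              · rcases h' with h' | h' <;>
                  rcases h' with h'' | ⟨h1, h2⟩ | ⟨h1, h2⟩
                · exact Or.inl h''.symm
                · exact Or.inr (Or.inl h2)
                · exact Or.inl h2
                · exact Or.inr (Or.inr (Or.inl h''.symm))
                · exact Or.inr (Or.inr (Or.inr h2))
                · exact Or.inr (Or.inr (Or.inl h2))
              · rcases h' with h' | h' <;>
                  rcases h' with h'' | ⟨h1, h2⟩ | ⟨h1, h2⟩
                · exact Or.inr (Or.inl h''.symm)
                · exact Or.inr (Or.inl h2)
                · exact Or.inl h2
                · exact Or.inr (Or.inr (Or.inr h''.symm))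
                · exact Or.inr (Or.inr (Or.inr h2))
                · exact Or.inr (Or.inr (Or.inl h2))
            have hBd : (B \ {a, b}).ncard ≤ 1 := by
              refine (Set.ncard_le_one (Set.toFinite _)).mpr (fun p hp q hq => ?_)
              by_contra hpq
              simp only [Set.mem_diff, Set.mem_insert_iff, Set.mem_singleton_iff,
                not_or] at hp hq
              rcases hhit p hp.1 q hq.1 hpq with h | h | h | h
              · exact hp.2.1 h
              · exact hp.2.2 h
              · exact hq.2.1 h
              · exact hq.2.2 h
            have hBc : B.ncard ≤ 3 := by
              have hsub' : B ⊆ (B \ {a, b}) ∪ {a, b} := by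
                intro x hx
                by_cases h : x ∈ ({a, b} : Set V)
                · exact Or.inr h
                · exact Or.inl ⟨hx, h⟩
              have h1 := Set.ncard_le_ncard hsub' (Set.toFinite _)
              have h2 := Set.ncard_union_le (B \ {a, b}) ({a, b} : Set V)
              have h3 : ({a, b} : Set V).ncard ≤ 2 :=
                ncard_le_two_of_subset_pair (subset_refl _)
              omega
            omega
      · push_neg at hB2
        have hB1 : B.ncard ≤ 1 := (Set.ncard_le_one (Set.toFinite _)).mpr
          (fun p hp q hq => hB2 p hp q hq)
        have := hAcard hA
        omega

lemma upper_bound (hn : 4 ≤ Fintype.card V) (hab : a ≠ b) {S : Set (Option (V ⊕ V))}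
    (hS : IsGPSet (Mycielskian (Kg a b)) S) : S.ncard ≤ Fintype.card V := by
  classical
  set A : Set V := {u : V | some (Sum.inl u) ∈ S} with hA_def
  set B : Set V := {u : V | some (Sum.inr u) ∈ S} with hB_def
  have hinl : Function.Injective (fun u : V => (some (Sum.inl u) : Option (V ⊕ V))) := by
    intro x y h; simpa using h
  have hinr : Function.Injective (fun u : V => (some (Sum.inr u) : Option (V ⊕ V))) := by
    intro x y h; simpa using h
  have hsub : S ⊆ (fun u : V => (some (Sum.inl u) : Option (V ⊕ V))) '' A ∪
      (fun u : V => (some (Sum.inr u) : Option (V ⊕ V))) '' B ∪ {x | x = none ∧ none ∈ S} := by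
    rintro (_ | (u | u)) hx
    · exact Or.inr ⟨rfl, hx⟩
    · exact Or.inl (Or.inl ⟨u, hx, rfl⟩)
    · exact Or.inl (Or.inr ⟨u, hx, rfl⟩)
  have hcount : S.ncard ≤ A.ncard + B.ncard + (if none ∈ S then 1 else 0) := by
    refine le_trans (Set.ncard_le_ncard hsub (Set.toFinite _)) ?_
    refine le_trans (Set.ncard_union_le _ _) ?_
    have h1 := Set.ncard_union_le ((fun u : V => (some (Sum.inl u) : Option (V ⊕ V))) '' A)
      ((fun u : V => (some (Sum.inr u) : Option (V ⊕ V))) '' B)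
    rw [Set.ncard_image_of_injective _ hinl, Set.ncard_image_of_injective _ hinr] at h1
    have h2 : ({x : Option (V ⊕ V) | x = none ∧ none ∈ S}).ncard ≤
        (if none ∈ S then 1 else 0) := by
      split
      · have hss : {x : Option (V ⊕ V) | x = none ∧ none ∈ S} ⊆ {none} :=
          fun x hx => hx.1
        refine le_trans (Set.ncard_le_ncard hss (Set.toFinite _)) ?_
        simp
      · next h =>
        have : {x : Option (V ⊕ V) | x = none ∧ none ∈ S} = ∅ := by
          ext x; simp_all
        simp [this]
    omega
  have F1 : none ∈ S → ∀ u ∈ B, ∀ v ∈ B, u = v := by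
    intro h0 u hu v hv
    by_contra huv
    exact gp_no_middle hn hS hu hv h0 (by simpa using huv) (by simp) (by simp)
      myc_adj_rr myc_adj_rn myc_adj_nr
  have F2 : ∀ u ∈ B, ∀ v ∈ B, ∀ w ∈ A, u ≠ v →
      (w = u ∨ (w = a ∧ u = b) ∨ (w = b ∧ u = a)) ∨
      (w = v ∨ (w = a ∧ v = b) ∨ (w = b ∧ v = a)) := by
    intro u hu v hv w hw huv
    have h : ¬((Kg a b).Adj w u ∧ (Kg a b).Adj w v) := by
      rintro ⟨h1, h2⟩
      exact gp_no_middle hn hS hu hv hw (by simpa using huv) (by simp) (by simp)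
        myc_adj_rr (myc_adj_rl.mpr h1) (myc_adj_lr.mpr h2)
    rcases not_and_or.mp h with h | h
    · exact Or.inl (not_Kadj.mp h)
    · exact Or.inr (not_Kadj.mp h)
  have F3 : ∀ u, u ∈ A → u ∈ B → ∀ w ∈ A, w ≠ u →
      (w = u ∨ (w = a ∧ u = b) ∨ (w = b ∧ u = a)) := by
    intro u hu hu' w hw hwu
    refine not_Kadj.mp (fun h => ?_)
    exact gp_no_middle hn hS hu hu' hw (by simp) (by simpa using hwu) (by simp)
      (fun h' => (Kg a b).irrefl (myc_adj_lr.mp h'))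
      (myc_adj_ll.mpr h.symm) (myc_adj_lr.mpr h)
  have F5a : a ∈ A → b ∈ A → ∀ c ∈ A, c = a ∨ c = b := by
    intro ha hb c hc
    by_contra h
    push_neg at h
    obtain ⟨hca, hcb⟩ := h
    exact gp_no_middle hn hS ha hb hc (by simpa using hab) (by simpa using hca)
      (by simpa using hcb)
      (fun h' => not_Kadj.mpr (Or.inr (Or.inl ⟨rfl, rfl⟩)) (myc_adj_ll.mp h'))
      (myc_adj_ll.mpr (Kadj_of_fresh hca hca hcb))
      (myc_adj_ll.mpr (Kadj_of_fresh hcb hca hcb).symm)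
  have F5b : a ∈ A → b ∈ A → ∀ c ∈ B, c = a ∨ c = b := by
    intro ha hb c hc
    by_contra h
    push_neg at h
    obtain ⟨hca, hcb⟩ := h
    exact gp_no_middle hn hS ha hb hc (by simpa using hab) (by simp) (by simp)
      (fun h' => not_Kadj.mpr (Or.inr (Or.inl ⟨rfl, rfl⟩)) (myc_adj_ll.mp h'))
      (myc_adj_lr.mpr (Kadj_of_fresh hca hca hcb))
      (myc_adj_rl.mpr (Kadj_of_fresh hcb hca hcb))
  have F6 : none ∈ S → ∀ u ∈ A, ∀ w ∈ B,
      (u = w ∨ (u = a ∧ w = b) ∨ (u = b ∧ w = a)) := by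
    intro h0 u hu w hw
    refine not_Kadj.mp (fun h => ?_)
    exact gp_no_middle hn hS hu h0 hw (by simp) (by simp) (by simp)
      myc_adj_ln (myc_adj_lr.mpr h) myc_adj_rn
  by_cases hnone : none ∈ S
  · rw [if_pos hnone] at hcount
    exact le_trans hcount (count_main hn hab A B 1 le_rfl (fun _ => F1 hnone) F2 F3
      F5a F5b (fun _ => F6 hnone))
  · rw [if_neg hnone] at hcount
    exact le_trans (by omega) (count_main hn hab A B 0 (by omega)
      (fun h => absurd h (by norm_num)) F2 F3 F5a F5b (fun h => absurd h (by norm_num)))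

end main

theorem gpNumber_mycielskian_complete_minus_edge [Fintype V]
    (hn : 4 ≤ Fintype.card V) (a b : V) (hab : a ≠ b) :
    gpNumber (Mycielskian ((⊤ : SimpleGraph V).deleteEdges {s(a, b)})) =
      Fintype.card V := by
  show gpNumber (Mycielskian (Kg a b)) = Fintype.card V
  have hinr : Function.Injective (fun u : V => (some (Sum.inr u) : Option (V ⊕ V))) := by
    intro x y h; simpa using h
  have hTcard : (Set.range fun v : V => (some (Sum.inr v) : Option (V ⊕ V))).ncard =
      Fintype.card V := by
    rw [← Set.image_univ, Set.ncard_image_of_injective _ hinr, Set.ncard_univ,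
      Nat.card_eq_fintype_card]
  have hmem : Fintype.card V ∈
      {k | ∃ S : Set (Option (V ⊕ V)), IsGPSet (Mycielskian (Kg a b)) S ∧ S.ncard = k} :=
    ⟨_, lower_gp hn, hTcard⟩
  apply le_antisymm
  · refine csSup_le ⟨_, hmem⟩ ?_
    rintro k ⟨S, hS, rfl⟩
    exact upper_bound hn hab hS
  · refine le_csSup ⟨Fintype.card V, ?_⟩ hmem
    rintro k ⟨S, hS, rfl⟩
    exact upper_bound hn hab hS
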